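/- Let α, β be nonzero real numbers with α ≠ β, let λ ≥ 1 and set t = (λ + 1/λ)/2. If t > ψ(α,β), then there exist linearly independent vectors v₁, v₂ ∈ ℝ² such that {v ∈ ℝ² : det(X_α(v), X_β^λ(v)) = 0} = ℝ·v₁ ∪ ℝ·v₂; that is, the tangency set of the pair (L_α, L_β^λ) is the union of two distinct lines through the origin. -/

import Mathlib

noncomputable def psi (α β : ℝ) : ℝ :=
  (-(α * β) + |α * β| * Real.sqrt ((α ^ 2 + 1) * (β ^ 2 + 1))) / (α ^ 2 * β ^ 2)

/-- `det2 v w = v₁w₂ − v₂w₁`. -/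
def det2 (v w : ℝ × ℝ) : ℝ := v.1 * w.2 - v.2 * w.1

/-- The logarithmic vector field `X_α(x,y) = (x − αy, αx + y)`. -/
def Xlog (α : ℝ) (v : ℝ × ℝ) : ℝ × ℝ := (v.1 - α * v.2, α * v.1 + v.2)

/-- The pushforward of `X_β` by `B_λ = diag(1,λ)`. -/
noncomputable def XlogLam (β l : ℝ) (v : ℝ × ℝ) : ℝ × ℝ :=
  (v.1 - (β / l) * v.2, l * β * v.1 + v.2)

theorem tangency_set_two_lines (α β l : ℝ) (hα : α ≠ 0) (hβ : β ≠ 0)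
    (hαβ : α ≠ β) (hl : 1 ≤ l) (ht : psi α β < (l + 1 / l) / 2) :
    ∃ v₁ v₂ : ℝ × ℝ, LinearIndependent ℝ ![v₁, v₂] ∧
      {v : ℝ × ℝ | det2 (Xlog α v) (XlogLam β l v) = 0} =
        (Set.range fun c : ℝ => c • v₁) ∪ (Set.range fun c : ℝ => c • v₂) := by
  have hl0 : (0:ℝ) < l := lt_of_lt_of_le one_pos hl
  have hlne : l ≠ 0 := ne_of_gt hl0
  set A := l * β - α with hAdef
  set B := α * β * (1 / l - l) with hBdef
  set C := β / l - α with hCdef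
  have key : ∀ x y : ℝ, det2 (Xlog α (x, y)) (XlogLam β l (x, y)) =
      A * x ^ 2 + B * (x * y) + C * y ^ 2 := by
    intro x y
    simp only [det2, Xlog, XlogLam, hAdef, hBdef, hCdef]
    field_simp
    ring
  -- discriminant positive
  have hab2 : (0:ℝ) < α ^ 2 * β ^ 2 := by positivity
  have hX : (0:ℝ) ≤ (α ^ 2 + 1) * (β ^ 2 + 1) := by positivity
  have hsq : Real.sqrt ((α ^ 2 + 1) * (β ^ 2 + 1)) ^ 2 = (α ^ 2 + 1) * (β ^ 2 + 1) :=
    Real.sq_sqrt hX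
  have hR : (0:ℝ) ≤ 2 * |α * β| * Real.sqrt ((α ^ 2 + 1) * (β ^ 2 + 1)) := by positivity
  have h1 : -(α * β) + |α * β| * Real.sqrt ((α ^ 2 + 1) * (β ^ 2 + 1)) <
      (l + 1 / l) / 2 * (α ^ 2 * β ^ 2) := by
    rw [psi, div_lt_iff₀ hab2] at ht
    exact ht
  have hPR : 2 * |α * β| * Real.sqrt ((α ^ 2 + 1) * (β ^ 2 + 1)) <
      α ^ 2 * β ^ 2 * (l + 1 / l) + 2 * (α * β) := by nlinarith [h1]
  have hP2 : (2 * |α * β| * Real.sqrt ((α ^ 2 + 1) * (β ^ 2 + 1))) ^ 2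
      = 4 * (α ^ 2 * β ^ 2) * ((α ^ 2 + 1) * (β ^ 2 + 1)) := by
    rw [mul_pow, mul_pow, hsq, sq_abs]
    ring
  have hident : α ^ 2 * β ^ 2 * (B ^ 2 - 4 * A * C) =
      (α ^ 2 * β ^ 2 * (l + 1 / l) + 2 * (α * β)) ^ 2
        - 4 * (α ^ 2 * β ^ 2) * ((α ^ 2 + 1) * (β ^ 2 + 1)) := by
    simp only [hAdef, hBdef, hCdef]
    field_simp
    ring
  have hD : 0 < B ^ 2 - 4 * A * C := by
    have hsq2 : 0 < (α ^ 2 * β ^ 2 * (l + 1 / l) + 2 * (α * β)) ^ 2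
        - 4 * (α ^ 2 * β ^ 2) * ((α ^ 2 + 1) * (β ^ 2 + 1)) := by
      nlinarith [hPR, hR, hP2]
    have h3 : 0 < α ^ 2 * β ^ 2 * (B ^ 2 - 4 * A * C) := hident ▸ hsq2
    by_contra hc
    push_neg at hc
    exact absurd h3 (not_lt.mpr (mul_nonpos_of_nonneg_of_nonpos hab2.le hc))
  by_cases hA : A = 0
  · have hB : B ≠ 0 := by
      intro h
      rw [hA, h] at hD
      norm_num at hD
    refine ⟨(1, 0), (-C, B), ?_, ?_⟩
    · rw [LinearIndependent.pair_iff']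
      · intro a h
        rw [Prod.ext_iff] at h
        simp only [Prod.smul_mk, smul_eq_mul, mul_one, mul_zero] at h
        exact hB h.2.symm
      · simp [Prod.ext_iff]
    · ext ⟨x, y⟩
      simp only [Set.mem_setOf_eq, Set.mem_union, Set.mem_range, key, Prod.smul_mk,
        smul_eq_mul, Prod.mk.injEq, mul_one, mul_zero]
      constructor
      · intro h
        rw [hA] at h
        have h' : y * (B * x + C * y) = 0 := by linear_combination h
        rcases mul_eq_zero.mp h' with hy | hxy
        · exact Or.inl ⟨x, rfl, hy.symm⟩
        · refine Or.inr ⟨y / B, ?_, ?_⟩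
          · field_simp
            linarith [hxy]
          · field_simp
      · rintro (⟨c, hc1, hc2⟩ | ⟨c, hc1, hc2⟩)
        · rw [hA, ← hc1, ← hc2]; ring
        · rw [hA, ← hc1, ← hc2]; ring
  · have hDs : 0 < Real.sqrt (B ^ 2 - 4 * A * C) := Real.sqrt_pos.mpr hD
    have hs2 : Real.sqrt (B ^ 2 - 4 * A * C) ^ 2 = B ^ 2 - 4 * A * C := Real.sq_sqrt hD.le
    set s := Real.sqrt (B ^ 2 - 4 * A * C) with hsdef
    set r₁ := (-B + s) / (2 * A) with hr1
    set r₂ := (-B - s) / (2 * A) with hr2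
    have hsum : A * (r₁ + r₂) = -B := by
      rw [hr1, hr2]; field_simp; ring
    have hprod : A * (r₁ * r₂) = C := by
      rw [hr1, hr2]
      rw [div_mul_div_comm, mul_div_assoc', div_eq_iff (mul_ne_zero (mul_ne_zero two_ne_zero hA) (mul_ne_zero two_ne_zero hA))]
      linear_combination (-A) * hs2
    have h2A : (2 * A) ≠ 0 := mul_ne_zero two_ne_zero hA
    have hr12 : r₁ ≠ r₂ := by
      intro h
      rw [hr1, hr2, div_eq_div_iff h2A h2A] at h
      have h' : -B + s = -B - s := mul_right_cancel₀ h2A h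
      have : s = 0 := by linarith
      exact absurd this (ne_of_gt hDs)
    clear_value r₁ r₂ s A B C
    have hfact : ∀ x y : ℝ, A * x ^ 2 + B * (x * y) + C * y ^ 2
        = A * ((x - r₁ * y) * (x - r₂ * y)) := by
      intro x y
      linear_combination (x * y) * hsum - y ^ 2 * hprod
    refine ⟨(r₁, 1), (r₂, 1), ?_, ?_⟩
    · rw [LinearIndependent.pair_iff']
      · intro a h
        rw [Prod.ext_iff] at h
        simp only [Prod.smul_mk, smul_eq_mul, mul_one] at h
        rw [h.2] at h
        exact hr12 (by rw [← h.1, one_mul])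
      · simp [Prod.ext_iff, hr12]
    · ext ⟨x, y⟩
      simp only [Set.mem_setOf_eq, Set.mem_union, Set.mem_range, key, Prod.smul_mk,
        smul_eq_mul, Prod.mk.injEq, mul_one]
      rw [hfact]
      constructor
      · intro h
        rcases mul_eq_zero.mp h with h0 | h0
        · exact absurd h0 hA
        rcases mul_eq_zero.mp h0 with h1 | h1
        · exact Or.inl ⟨y, by linarith [h1], rfl⟩
        · exact Or.inr ⟨y, by linarith [h1], rfl⟩
      · rintro (⟨c, hc1, hc2⟩ | ⟨c, hc1, hc2⟩)
        · rw [← hc1, ← hc2]; ring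
        · rw [← hc1, ← hc2]; ring
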